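/- The function d(𝒫, 𝒬) := sup over nonzero objects E of max(|φ⁺_𝒫(E) − φ⁺_𝒬(E)|, |φ⁻_𝒫(E) − φ⁻_𝒬(E)|) defines a generalized metric (possibly taking value ∞) on the set of slicings of a triangulated category: it is symmetric, satisfies the triangle inequality, and d(𝒫,𝒬) = 0 implies 𝒫 = 𝒬. -/

import Mathlib

open CategoryTheory CategoryTheory.Limits CategoryTheory.Pretriangulated

universe v u

variable (C : Type u) [Category.{v} C] [Preadditive C] [HasZeroObject C] [HasShift C ℤ]
  [∀ n : ℤ, (shiftFunctor C n).Additive] [Pretriangulated C]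

variable {C} in
/-- `E` admits a Harder–Narasimhan filtration
`0 = E₀ → E₁ → ... → Eₙ ≅ E` by distinguished triangles `E_{i-1} → E_i → A_i → E_{i-1}[1]`
with nonzero factors `A_i ∈ 𝒫(φ_i)` and `φ₁ > ... > φₙ`, all phases satisfying the
predicate `pred`. (For `E ≅ 0` one takes `n = 0`.) -/
def HasHNWith (P : ℝ → C → Prop) (pred : ℝ → Prop) (E : C) : Prop :=
  ∃ (n : ℕ) (obj : Fin (n + 1) → C) (f : ∀ i : Fin n, obj i.castSucc ⟶ obj i.succ)
    (A : Fin n → C) (π : ∀ i : Fin n, obj i.succ ⟶ A i)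
    (δ : ∀ i : Fin n, A i ⟶ (obj i.castSucc)⟦(1 : ℤ)⟧) (φ : Fin n → ℝ),
    IsZero (obj 0) ∧ Nonempty (obj (Fin.last n) ≅ E) ∧ StrictAnti φ ∧
    (∀ i, ¬ IsZero (A i)) ∧ (∀ i, P (φ i) (A i)) ∧ (∀ i, pred (φ i)) ∧
    (∀ i, Triangle.mk (f i) (π i) (δ i) ∈ distTriang C)

/-- A slicing of a triangulated category: full additive subcategories `𝒫(φ)`, `φ ∈ ℝ`,
with `Hom(𝒫(φ₁), 𝒫(φ₂)) = 0` for `φ₁ > φ₂`, `𝒫(φ)[1] = 𝒫(φ+1)` and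
Harder–Narasimhan filtrations for all objects. -/
structure TriSlicing where
  P : ℝ → C → Prop
  iso_closed : ∀ (φ : ℝ) {E F : C}, (E ≅ F) → P φ E → P φ F
  zero_mem : ∀ (φ : ℝ) (E : C), IsZero E → P φ E
  hom_zero : ∀ {φ₁ φ₂ : ℝ}, φ₂ < φ₁ → ∀ {E F : C} (f : E ⟶ F), P φ₁ E → P φ₂ F → f = 0
  shift : ∀ (φ : ℝ) (E : C), P φ E ↔ P (φ + 1) (E⟦(1 : ℤ)⟧)
  HN : ∀ E : C, HasHNWith P (fun _ => True) E

variable {C}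

/-- The maximal HN phase `φ⁺(E)` of a nonzero object, defined as the infimum of all `a`
such that all HN factors of `E` have phase `≤ a`. -/
noncomputable def TriSlicing.phiPlus (σ : TriSlicing C) (E : C) : ℝ :=
  sInf {a : ℝ | HasHNWith σ.P (fun ψ => ψ ≤ a) E}

/-- The minimal HN phase `φ⁻(E)` of a nonzero object, defined as the supremum of all `a`
such that all HN factors of `E` have phase `≥ a`. -/
noncomputable def TriSlicing.phiMinus (σ : TriSlicing C) (E : C) : ℝ :=
  sSup {a : ℝ | HasHNWith σ.P (fun ψ => a ≤ ψ) E}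

/-- The generalized distance between two slicings:
`d(𝒫,𝒬) = sup_{E ≠ 0} max(|φ⁺_𝒫(E) − φ⁺_𝒬(E)|, |φ⁻_𝒫(E) − φ⁻_𝒬(E)|) ∈ [0,∞]`. -/
noncomputable def slicingDist (σ τ : TriSlicing C) : ENNReal :=
  ⨆ E : {E : C // ¬ IsZero E},
    ENNReal.ofReal (max |σ.phiPlus E.1 - τ.phiPlus E.1| |σ.phiMinus E.1 - τ.phiMinus E.1|)

lemma homZeroLe (σ : TriSlicing C) {a φ : ℝ} {E B : C} (hB : σ.P φ B) (hlt : a < φ)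
    (hE : HasHNWith σ.P (fun ψ => ψ ≤ a) E) (g : B ⟶ E) : g = 0 := by
  obtain ⟨n, obj, f, A, π, δ, ψ, hz, ⟨e⟩, -, -, hPA, hle, hdist⟩ := hE
  suffices h : ∀ i : Fin (n+1), ∀ g : B ⟶ obj i, g = 0 by
    calc g = (g ≫ e.inv) ≫ e.hom := by simp
    _ = 0 := by rw [h (Fin.last n) (g ≫ e.inv), zero_comp]
  intro i
  induction i using Fin.induction with
  | zero => exact fun g => hz.eq_zero_of_tgt g
  | succ i ih =>
    intro g
    have h2 : g ≫ π i = 0 :=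
      σ.hom_zero (lt_of_le_of_lt (hle i) hlt) _ hB (hPA i)
    obtain ⟨u, hu⟩ := Triangle.coyoneda_exact₂ _ (hdist i) g h2
    rw [hu, ih u]; exact zero_comp

lemma homZeroGe (σ : TriSlicing C) {a φ : ℝ} {E B : C} (hB : σ.P φ B) (hlt : φ < a)
    (hE : HasHNWith σ.P (fun ψ => a ≤ ψ) E) (g : E ⟶ B) : g = 0 := by
  obtain ⟨n, obj, f, A, π, δ, ψ, hz, ⟨e⟩, -, -, hPA, hge, hdist⟩ := hE
  suffices h : ∀ i : Fin (n+1), ∀ g : obj i ⟶ B, g = 0 by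
    calc g = e.inv ≫ (e.hom ≫ g) := by simp
    _ = 0 := by rw [h (Fin.last n) (e.hom ≫ g), comp_zero]
  intro i
  induction i using Fin.induction with
  | zero => exact fun g => hz.eq_zero_of_src g
  | succ i ih =>
    intro g
    have h2 : f i ≫ g = 0 := by rw [ih (f i ≫ g)]
    obtain ⟨u, hu⟩ := Triangle.yoneda_exact₂ _ (hdist i) g h2
    have hu0 : u = 0 := σ.hom_zero (lt_of_lt_of_le hlt (hge i)) _ (hPA i) hB
    rw [hu, hu0]; exact comp_zero

lemma phiPlusEq (σ : TriSlicing C) {E : C} {m : ℕ}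
    (obj : Fin (m+2) → C) (f : ∀ i : Fin (m+1), obj i.castSucc ⟶ obj i.succ)
    (A : Fin (m+1) → C) (π : ∀ i, obj i.succ ⟶ A i)
    (δ : ∀ i, A i ⟶ (obj i.castSucc)⟦(1:ℤ)⟧)
    (φ : Fin (m+1) → ℝ) (hz : IsZero (obj 0)) (e : obj (Fin.last (m+1)) ≅ E)
    (hanti : StrictAnti φ) (hnz : ∀ i, ¬ IsZero (A i)) (hPA : ∀ i, σ.P (φ i) (A i))
    (hdist : ∀ i, Triangle.mk (f i) (π i) (δ i) ∈ distTriang C) :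
    σ.phiPlus E = φ 0 := by
  have hmem : HasHNWith σ.P (fun ψ => ψ ≤ φ 0) E :=
    ⟨m+1, obj, f, A, π, δ, φ, hz, ⟨e⟩, hanti, hnz, hPA,
      fun i => hanti.antitone (Fin.zero_le i), hdist⟩
  have key : ∀ i : Fin (m+2), 0 < i.val → ∃ g : A 0 ⟶ obj i, g ≠ 0 := by
    intro i
    induction i using Fin.induction with
    | zero => exact fun h => absurd h (by simp)
    | succ i ih =>
      intro _
      rcases eq_or_ne i 0 with rfl | hne
      · have hz' : IsZero ((Triangle.mk (f 0) (π 0) (δ 0)).obj₁) := by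
          exact hz
        have : IsIso (π 0) := (Triangle.isZero₁_iff_isIso₂ _ (hdist 0)).1 hz'
        refine ⟨inv (π 0), fun h => hnz 0 ?_⟩
        rw [IsZero.iff_id_eq_zero]
        calc 𝟙 (A 0) = inv (π 0) ≫ π 0 := (IsIso.inv_hom_id (π 0)).symm
        _ = 0 := by rw [h, zero_comp]
      · obtain ⟨g, hg⟩ := ih (by
          have : i.val ≠ 0 := fun h => hne (Fin.ext h)
          simpa [Fin.castSucc] using Nat.pos_of_ne_zero this)
        refine ⟨g ≫ f i, fun h => hg ?_⟩
        obtain ⟨u, hu⟩ :=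
          Triangle.coyoneda_exact₂ _ (inv_rot_of_distTriang _ (hdist i)) g h
        have hsh : σ.P (φ i - 1) ((A i)⟦(-1:ℤ)⟧) := by
          rw [σ.shift]
          have h1 : σ.P (φ i - 1 + 1) (A i) := by rw [sub_add_cancel]; exact hPA i
          exact σ.iso_closed _
            ((shiftFunctorCompIsoId C (-1:ℤ) (1:ℤ) (by omega)).symm.app (A i)) h1
        have hu0 : u = 0 :=
          σ.hom_zero (by
            have := hanti.antitone (Fin.zero_le i)
            linarith) u (hPA 0) hsh
        rw [hu, hu0]; exact zero_comp
  obtain ⟨g0, hg0⟩ := key (Fin.last (m+1)) (by simp)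
  have hg : (g0 ≫ e.hom : A 0 ⟶ E) ≠ 0 := fun h => hg0 (by
    calc g0 = (g0 ≫ e.hom) ≫ e.inv := by simp
    _ = 0 := by rw [h, zero_comp])
  have hlb : ∀ a ∈ {a : ℝ | HasHNWith σ.P (fun ψ => ψ ≤ a) E}, φ 0 ≤ a := by
    intro a ha
    by_contra hcon
    exact hg (homZeroLe σ (hPA 0) (lt_of_not_ge hcon) ha _)
  exact le_antisymm (csInf_le ⟨φ 0, hlb⟩ hmem) (le_csInf ⟨φ 0, hmem⟩ hlb)

lemma phiMinusEq (σ : TriSlicing C) {E : C} {m : ℕ}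
    (obj : Fin (m+2) → C) (f : ∀ i : Fin (m+1), obj i.castSucc ⟶ obj i.succ)
    (A : Fin (m+1) → C) (π : ∀ i, obj i.succ ⟶ A i)
    (δ : ∀ i, A i ⟶ (obj i.castSucc)⟦(1:ℤ)⟧)
    (φ : Fin (m+1) → ℝ) (hz : IsZero (obj 0)) (e : obj (Fin.last (m+1)) ≅ E)
    (hanti : StrictAnti φ) (hnz : ∀ i, ¬ IsZero (A i)) (hPA : ∀ i, σ.P (φ i) (A i))
    (hdist : ∀ i, Triangle.mk (f i) (π i) (δ i) ∈ distTriang C) :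
    σ.phiMinus E = φ (Fin.last m) := by
  set l := Fin.last m with hl
  have hmem : HasHNWith σ.P (fun ψ => φ l ≤ ψ) E :=
    ⟨m+1, obj, f, A, π, δ, φ, hz, ⟨e⟩, hanti, hnz, hPA,
      fun i => hanti.antitone (Fin.le_last i), hdist⟩
  -- all maps from shifted filtration steps into A l vanish
  have key : ∀ j : Fin (m+2), ∀ u : (obj j)⟦(1:ℤ)⟧ ⟶ A l, u = 0 := by
    intro j
    induction j using Fin.induction with
    | zero => exact fun u => ((shiftFunctor C (1:ℤ)).map_isZero hz).eq_zero_of_src u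
    | succ j ih =>
      intro u
      have hT₁ := rot_of_distTriang _ (rot_of_distTriang _ (rot_of_distTriang _ (hdist j)))
      have hmor : ((Triangle.mk (f j) (π j) (δ j)).rotate.rotate.rotate).mor₁ ≫ u = 0 := by
        show (-(f j)⟦(1:ℤ)⟧') ≫ u = 0
        rw [Preadditive.neg_comp, ih ((f j)⟦(1:ℤ)⟧' ≫ u), neg_zero]
      obtain ⟨v, hv⟩ := Triangle.yoneda_exact₂ _ hT₁ u hmor
      have hsh : σ.P (φ j + 1) ((A j)⟦(1:ℤ)⟧) := (σ.shift _ _).1 (hPA j)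
      have hv0 : v = 0 := σ.hom_zero (by
          have := hanti.antitone (Fin.le_last j)
          linarith) v hsh (hPA l)
      rw [hv, hv0]; exact comp_zero
  -- π l is nonzero
  have hπ : π l ≠ 0 := by
    intro hπ0
    have hrot := rot_of_distTriang _ (hdist l)
    have hmor : ((Triangle.mk (f l) (π l) (δ l)).rotate).mor₁ ≫ 𝟙 (A l) = 0 := by
      show π l ≫ 𝟙 (A l) = 0
      rw [hπ0, zero_comp]
    obtain ⟨v, hv⟩ := Triangle.yoneda_exact₂ _ hrot (𝟙 (A l)) hmor
    have hv0 : v = 0 := key _ v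
    exact hnz l (by rw [IsZero.iff_id_eq_zero, hv, hv0]; exact comp_zero)
  have hg : (e.inv ≫ π l : E ⟶ A l) ≠ 0 := by
    intro h
    apply hπ
    calc π l = e.hom ≫ (e.inv ≫ π l) := by simp
    _ = 0 := by rw [h, comp_zero]
  have hub : ∀ a ∈ {a : ℝ | HasHNWith σ.P (fun ψ => a ≤ ψ) E}, a ≤ φ l := by
    intro a ha
    by_contra hcon
    exact hg (homZeroGe σ (hPA l) (lt_of_not_ge hcon) ha _)
  exact le_antisymm (csSup_le ⟨φ l, hmem⟩ hub) (le_csSup ⟨φ l, hub⟩ hmem)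

open ZeroObject in
lemma zeroIdZeroDist {Z X : C} (hZ : IsZero Z) :
    Triangle.mk (0 : Z ⟶ X) (𝟙 X) (0 : X ⟶ Z⟦(1:ℤ)⟧) ∈ distTriang C := by
  refine isomorphic_distinguished _ (contractible_distinguished₁ X) _ ?_
  refine Triangle.isoMk _ _ hZ.isoZero (Iso.refl X) (Iso.refl X) ?_ ?_ ?_
  · exact hZ.eq_of_src _ _
  · rfl
  · exact ((shiftFunctor C (1:ℤ)).map_isZero (isZero_zero C)).eq_of_tgt _ _

open ZeroObject in
lemma purePhis (σ : TriSlicing C) {φ : ℝ} {E : C} (hE : ¬ IsZero E) (hP : σ.P φ E) :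
    σ.phiPlus E = φ ∧ σ.phiMinus E = φ := by
  let obj : Fin 2 → C := fun i => if i.val = 0 then 0 else E
  have hz : IsZero (obj 0) := isZero_zero C
  have hd : ∀ i : Fin 1, Triangle.mk ((fun _ => 0 : ∀ i : Fin 1, obj i.castSucc ⟶ obj i.succ) i)
      ((fun _ => 𝟙 E : ∀ i : Fin 1, obj i.succ ⟶ (fun _ => E : Fin 1 → C) i) i)
      ((fun _ => 0 : ∀ i : Fin 1, (fun _ => E : Fin 1 → C) i ⟶ (obj i.castSucc)⟦(1:ℤ)⟧) i)
      ∈ distTriang C := by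
    intro i
    have h0 : i = 0 := Subsingleton.elim _ _
    subst h0
    exact zeroIdZeroDist (by simpa using hz)
  have hanti : StrictAnti (fun _ : Fin 1 => φ) :=
    fun a b h => absurd (Subsingleton.elim a b) (ne_of_lt h)
  constructor
  · exact phiPlusEq σ obj _ _ _ _ (fun _ => φ) hz (Iso.refl E) hanti
      (fun _ => hE) (fun _ => hP) hd
  · exact phiMinusEq σ obj _ _ _ _ (fun _ => φ) hz (Iso.refl E) hanti
      (fun _ => hE) (fun _ => hP) hd

lemma pureOfPhi (σ : TriSlicing C) {φ : ℝ} {E : C} (hE : ¬ IsZero E)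
    (h1 : σ.phiPlus E = φ) (h2 : σ.phiMinus E = φ) : σ.P φ E := by
  obtain ⟨n, obj, f, A, π, δ, ψ, hz, ⟨e⟩, hanti, hnz, hPA, -, hdist⟩ := σ.HN E
  rcases n with - | m
  · exact absurd (hz.of_iso e.symm) hE
  have hplus := phiPlusEq σ obj f A π δ ψ hz e hanti hnz hPA hdist
  have hminus := phiMinusEq σ obj f A π δ ψ hz e hanti hnz hPA hdist
  rcases m with - | m
  · -- single factor: E ≅ A 0
    have hz' : IsZero ((Triangle.mk (f 0) (π 0) (δ 0)).obj₁) := by simpa using hz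
    have : IsIso (π 0) := (Triangle.isZero₁_iff_isIso₂ _ (hdist 0)).1 hz'
    have hiso : A 0 ≅ E := (asIso (π 0)).symm ≪≫ e
    have : ψ 0 = φ := by rw [← h1, hplus]
    exact σ.iso_closed φ hiso (this ▸ hPA 0)
  · exfalso
    have hlt : (0 : Fin (m+2)) < Fin.last (m+1) := by
      rw [Fin.lt_def]; simp
    have := hanti hlt
    rw [h1] at hplus
    rw [h2] at hminus
    rw [← hplus, ← hminus] at this
    exact lt_irrefl _ this

/-!
STATEMENT 13: `d` is a generalized metric (with values in `[0,∞]`) on the set of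
slicings of a triangulated category: symmetric, satisfies the triangle inequality,
and `d(𝒫,𝒬) = 0` implies `𝒫 = 𝒬`.
-/

theorem slicingDist_generalized_metric
    (σ τ ρ : TriSlicing C) :
    slicingDist σ τ = slicingDist τ σ ∧
    slicingDist σ ρ ≤ slicingDist σ τ + slicingDist τ ρ ∧
    (slicingDist σ τ = 0 → σ = τ) := by
  refine ⟨?_, ?_, ?_⟩
  · unfold slicingDist
    congr 1
    funext E
    rw [abs_sub_comm (σ.phiPlus E.1), abs_sub_comm (σ.phiMinus E.1)]
  · refine iSup_le fun E => ?_
    have h1 : max |σ.phiPlus E.1 - ρ.phiPlus E.1| |σ.phiMinus E.1 - ρ.phiMinus E.1|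
        ≤ max |σ.phiPlus E.1 - τ.phiPlus E.1| |σ.phiMinus E.1 - τ.phiMinus E.1|
          + max |τ.phiPlus E.1 - ρ.phiPlus E.1| |τ.phiMinus E.1 - ρ.phiMinus E.1| := by
      apply max_le
      · calc |σ.phiPlus E.1 - ρ.phiPlus E.1|
            ≤ |σ.phiPlus E.1 - τ.phiPlus E.1| + |τ.phiPlus E.1 - ρ.phiPlus E.1| :=
              abs_sub_le _ _ _
        _ ≤ _ := add_le_add (le_max_left _ _) (le_max_left _ _)
      · calc |σ.phiMinus E.1 - ρ.phiMinus E.1|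
            ≤ |σ.phiMinus E.1 - τ.phiMinus E.1| + |τ.phiMinus E.1 - ρ.phiMinus E.1| :=
              abs_sub_le _ _ _
        _ ≤ _ := add_le_add (le_max_right _ _) (le_max_right _ _)
    calc ENNReal.ofReal (max |σ.phiPlus E.1 - ρ.phiPlus E.1| |σ.phiMinus E.1 - ρ.phiMinus E.1|)
        ≤ ENNReal.ofReal (max |σ.phiPlus E.1 - τ.phiPlus E.1| |σ.phiMinus E.1 - τ.phiMinus E.1|
          + max |τ.phiPlus E.1 - ρ.phiPlus E.1| |τ.phiMinus E.1 - ρ.phiMinus E.1|) :=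
          ENNReal.ofReal_le_ofReal h1
      _ ≤ ENNReal.ofReal (max |σ.phiPlus E.1 - τ.phiPlus E.1| |σ.phiMinus E.1 - τ.phiMinus E.1|)
          + ENNReal.ofReal
            (max |τ.phiPlus E.1 - ρ.phiPlus E.1| |τ.phiMinus E.1 - ρ.phiMinus E.1|) :=
          ENNReal.ofReal_add_le
      _ ≤ slicingDist σ τ + slicingDist τ ρ := by
          unfold slicingDist
          exact add_le_add
            (le_iSup (fun E : {E : C // ¬ IsZero E} => ENNReal.ofReal
              (max |σ.phiPlus E.1 - τ.phiPlus E.1| |σ.phiMinus E.1 - τ.phiMinus E.1|)) E)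
            (le_iSup (fun E : {E : C // ¬ IsZero E} => ENNReal.ofReal
              (max |τ.phiPlus E.1 - ρ.phiPlus E.1| |τ.phiMinus E.1 - ρ.phiMinus E.1|)) E)
  · intro h
    have key : ∀ E : C, ¬ IsZero E →
        σ.phiPlus E = τ.phiPlus E ∧ σ.phiMinus E = τ.phiMinus E := by
      intro E hE
      have hle := le_iSup (fun E : {E : C // ¬ IsZero E} =>
        ENNReal.ofReal (max |σ.phiPlus E.1 - τ.phiPlus E.1| |σ.phiMinus E.1 - τ.phiMinus E.1|))
        ⟨E, hE⟩
      rw [← slicingDist, h, le_zero_iff, ENNReal.ofReal_eq_zero] at hle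
      constructor
      · have := le_trans (le_max_left _ _) hle
        rw [abs_nonpos_iff, sub_eq_zero] at this
        exact this
      · have := le_trans (le_max_right _ _) hle
        rw [abs_nonpos_iff, sub_eq_zero] at this
        exact this
    have hP : σ.P = τ.P := by
      funext φ E
      apply propext
      by_cases hE : IsZero E
      · exact ⟨fun _ => τ.zero_mem φ E hE, fun _ => σ.zero_mem φ E hE⟩
      · obtain ⟨k1, k2⟩ := key E hE
        constructor
        · intro hσ
          obtain ⟨p1, p2⟩ := purePhis σ hE hσ
          exact pureOfPhi τ hE (by rw [← k1, p1]) (by rw [← k2, p2])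
        · intro hτ
          obtain ⟨p1, p2⟩ := purePhis τ hE hτ
          exact pureOfPhi σ hE (by rw [k1, p1]) (by rw [k2, p2])
    obtain ⟨σP, σ1, σ2, σ3, σ4, σ5⟩ := σ
    obtain ⟨τP, τ1, τ2, τ3, τ4, τ5⟩ := τ
    dsimp at hP
    subst hP
    rfl
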